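/- arXiv:2202.00835 — 7 statements merged into one kernel-verified Lean document; each statement's English description precedes it below -/
import Mathlib

section
/- For any composition α with N(α) = max{α_i + i : α_i ≠ 0}, and any i, j with j > i, we have max(0, min(α_i, α_i + j − N(α) − 1)) ≤ c_{i,j}(α) ≤ min(α_i, j − i − 1). -/
/-- The matrix `c_{i,j}(α)` defined recursively in `j`. -/
def cmat (α : ℕ → ℕ) (i : ℕ) : ℕ → ℕ
  | 0 => 0
  | j + 1 =>
    if j + 1 ≤ i + 1 then 0
    else cmat α i j + if α j < α i - cmat α i j then 1 else 0

/-- `α` covers `α'` in position `(i,j)`: conditions (a1)–(a4). -/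
def CoversAt (α α' : ℕ → ℕ) (i j : ℕ) : Prop :=
  1 ≤ i ∧ i < j ∧
  α' i + 1 ≤ α i ∧
  α' j + α' i + 1 = α j + α i ∧
  (∀ k, k ≠ i → k ≠ j → α' k = α k) ∧
  cmat α i j = cmat α' i j ∧
  cmat α i j + α j = α' i

/-- `N(α) = max { α_i + i : α_i ≠ 0 }`. -/
noncomputable def Nval (α : ℕ → ℕ) : ℕ :=
  sSup {m | ∃ i, α i ≠ 0 ∧ α i + i = m}

lemma cmat_succ (α : ℕ → ℕ) (i j : ℕ) (h : i < j) :
    cmat α i (j + 1) = cmat α i j + if α j < α i - cmat α i j then 1 else 0 := by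
  have : ¬ (j + 1 ≤ i + 1) := by omega
  simp [cmat, this]

/-- `max(0, min(α_i, α_i + j - N(α) - 1)) ≤ c_{i,j}(α) ≤ min(α_i, j - i - 1)`
(in `ℕ`, truncated subtraction realizes the `max(0, ·)`). -/
theorem cmat_bounds (α : ℕ → ℕ) (hne : ∃ i, α i ≠ 0)
    (hbd : ∃ m, ∀ k, m < k → α k = 0) (i j : ℕ) (hij : i < j) :
    min (α i) (α i + j - (Nval α + 1)) ≤ cmat α i j ∧
    cmat α i j ≤ min (α i) (j - i - 1) := by
  obtain ⟨m, hm⟩ := hbd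
  have hbdd : BddAbove {n | ∃ k, α k ≠ 0 ∧ α k + k = n} := by
    refine ⟨(Finset.range (m + 1)).sup α + m, ?_⟩
    rintro n ⟨k, hk0, rfl⟩
    have hkm : k ≤ m := by
      by_contra h
      exact hk0 (hm k (by omega))
    have : α k ≤ (Finset.range (m + 1)).sup α :=
      Finset.le_sup (Finset.mem_range.mpr (by omega))
    omega
  have hN : ∀ k, α k ≠ 0 → α k + k ≤ Nval α := fun k hk => le_csSup hbdd ⟨k, hk, rfl⟩
  have upper : ∀ j, i < j → cmat α i j ≤ min (α i) (j - i - 1) := by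
    intro j hj
    induction j, hj using Nat.le_induction with
    | base => simp [cmat]
    | succ j hj ih =>
      rw [cmat_succ α i j hj]
      split
      · next h =>
        have : cmat α i j < α i := by omega
        omega
      · omega
  refine ⟨?_, upper j hij⟩
  induction j, hij using Nat.le_induction with
  | base =>
    rcases Nat.eq_zero_or_pos (α i) with h0 | h0
    · simp [h0]
    · have hNi : α i + i ≤ Nval α := hN i (by omega)
      have : α i + (i + 1) - (Nval α + 1) = 0 := by omega
      simp [this]
  | succ j hj ih =>
    rw [cmat_succ α i j hj]
    rcases Nat.lt_or_ge (cmat α i j) (α i) with hc | hc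
    · split
      · next h => omega
      · next h =>
        have hα : α i - cmat α i j ≤ α j := by omega
        have hj0 : α j ≠ 0 := by omega
        have := hN j hj0
        omega
    · have : min (α i) (α i + (j + 1) - (Nval α + 1)) ≤ α i := min_le_left _ _
      omega
end

section
/- For a nonzero composition α with N(α) = max{α_i + i : α_i ≠ 0}, the index j = N(α) + 1 is the smallest j such that c_{i,j}(α) = α_i for every i. -/
lemma cmat_le (α : ℕ → ℕ) (i : ℕ) : ∀ j, cmat α i j ≤ α i
  | 0 => Nat.zero_le _
  | j + 1 => by
    have ih := cmat_le α i j
    simp only [cmat]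
    split
    · exact Nat.zero_le _
    · split <;> omega

lemma cmat_zero (α : ℕ → ℕ) (i : ℕ) (h : α i = 0) : ∀ j, cmat α i j = 0
  | 0 => rfl
  | j + 1 => by
    have ih := cmat_zero α i h j
    simp only [cmat]
    split
    · rfl
    · split <;> omega

lemma cmat_le_sub (α : ℕ → ℕ) (i : ℕ) : ∀ j, cmat α i j ≤ j - (i + 1)
  | 0 => by simp [cmat]
  | j + 1 => by
    have ih := cmat_le_sub α i j
    simp only [cmat]
    split
    · exact Nat.zero_le _
    · split <;> omega

lemma cmat_inv (α : ℕ → ℕ) (N : ℕ) (hN : ∀ k, α k ≠ 0 → α k + k ≤ N)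
    (i : ℕ) (hi : α i ≠ 0) :
    ∀ j, i + 1 ≤ j → cmat α i j = α i ∨ (α i - cmat α i j) + j ≤ N + 1 := by
  intro j hj
  induction j, hj using Nat.le_induction with
  | base =>
    right
    have h0 : cmat α i (i + 1) = 0 := by simp [cmat]
    have := hN i hi
    omega
  | succ j hj ih =>
    have hle := cmat_le α i j
    have hcm : cmat α i (j + 1)
        = cmat α i j + if α j < α i - cmat α i j then 1 else 0 := by
      simp only [cmat]
      rw [if_neg (by omega)]
    by_cases hlt : α j < α i - cmat α i j
    · rw [if_pos hlt] at hcm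
      rcases ih with h | h
      · omega
      · by_cases he : cmat α i j + 1 = α i
        · left; omega
        · right; omega
    · rw [if_neg hlt] at hcm
      rcases ih with h | h
      · left; omega
      · by_cases he : cmat α i j = α i
        · left; omega
        · have haj : α j ≠ 0 := by omega
          have := hN j haj
          right; omega

/-- `N(α) + 1` is the smallest index `j` such that
`c_{i,j}(α) = α_i` for every `i`. -/
theorem cmat_stabilizes_at_N (α : ℕ → ℕ) (hne : ∃ i, α i ≠ 0)
    (hbd : ∃ m, ∀ k, m < k → α k = 0) :
    (∀ i, cmat α i (Nval α + 1) = α i) ∧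
    (∀ j, (∀ i, cmat α i j = α i) → Nval α + 1 ≤ j) := by
  obtain ⟨m, hm⟩ := hbd
  have hSne : {n | ∃ i, α i ≠ 0 ∧ α i + i = n}.Nonempty := by
    obtain ⟨i, hi⟩ := hne; exact ⟨α i + i, i, hi, rfl⟩
  have hSbd : BddAbove {n | ∃ i, α i ≠ 0 ∧ α i + i = n} := by
    refine ⟨(Finset.range (m + 1)).sup (fun i => α i + i), ?_⟩
    rintro x ⟨i, hi, rfl⟩
    have him : i ≤ m := by
      by_contra h; exact hi (hm i (by omega))
    exact Finset.le_sup (f := fun i => α i + i) (Finset.mem_range.mpr (Nat.lt_succ_of_le him))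
  have hNmem : ∃ i, α i ≠ 0 ∧ α i + i = Nval α := Nat.sSup_mem hSne hSbd
  have hNle : ∀ k, α k ≠ 0 → α k + k ≤ Nval α := fun k hk => le_csSup hSbd ⟨k, hk, rfl⟩
  constructor
  · intro i
    by_cases hi : α i = 0
    · rw [cmat_zero α i hi, hi]
    · have hle := cmat_le α i (Nval α + 1)
      have hiN := hNle i hi
      have := cmat_inv α (Nval α) hNle i hi (Nval α + 1) (by omega)
      omega
  · intro j hj
    obtain ⟨i₀, hi₀, hN⟩ := hNmem
    by_contra h
    have h1 := cmat_le_sub α i₀ j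
    have h2 := hj i₀
    omega
end

section
/- Let α and α̃ be compositions with α̃_i ≤ α_i and suppose there exists l > i such that α̃_k ≥ α_k for every k in [i+1, l]. Then c_{i,k}(α̃) ≤ c_{i,k}(α) for every k in [i+1, l+1]. -/
/-- Lemma on comparison of compositions. -/
theorem cmat_compare (α αt : ℕ → ℕ) (i l : ℕ) (hi : αt i ≤ α i) (hl : i < l)
    (h : ∀ k, i + 1 ≤ k → k ≤ l → α k ≤ αt k) :
    ∀ k, i + 1 ≤ k → k ≤ l + 1 → cmat αt i k ≤ cmat α i k := by
  intro k hk1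
  induction k, hk1 using Nat.le_induction with
  | base =>
    intro _
    have e1 : cmat α i (i + 1) = 0 := by rw [cmat]; simp
    have e2 : cmat αt i (i + 1) = 0 := by rw [cmat]; simp
    omega
  | succ k hk ih =>
    intro hk2
    have hc := ih (by omega)
    have hα : α k ≤ αt k := h k hk (by omega)
    have e1 : cmat α i (k + 1)
        = cmat α i k + if α k < α i - cmat α i k then 1 else 0 := by
      rw [cmat, if_neg (by omega)]
    have e2 : cmat αt i (k + 1)
        = cmat αt i k + if αt k < αt i - cmat αt i k then 1 else 0 := by
      rw [cmat, if_neg (by omega)]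
    rw [e1, e2]
    rcases eq_or_lt_of_le hc with heq | hlt
    · have hd : αt i - cmat αt i k ≤ α i - cmat α i k := by
        rw [heq]; exact Nat.sub_le_sub_right hi _
      by_cases hb : αt k < αt i - cmat αt i k
      · rw [if_pos hb, if_pos (by omega)]; omega
      · rw [if_neg hb]; split <;> omega
    · split <;> split <;> omega
end

section
/- Let w, w' ∈ S_n with codes α = code(w) and α' = code(w'). If there exists an index i such that α'_i = α_i − 1 and α'_k = α_k for every k ≠ i, then w covers w' in the strong Bruhat order. -/
/-- The Lehmer code of a permutation of `Fin n`. -/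
def lehmer {n : ℕ} (w : Equiv.Perm (Fin n)) (i : Fin n) : ℕ :=
  (Finset.univ.filter (fun k : Fin n => i < k ∧ w k < w i)).card

/-- Number of inversions (the length) of a permutation. -/
def nInv {n : ℕ} (w : Equiv.Perm (Fin n)) : ℕ :=
  (Finset.univ.filter (fun p : Fin n × Fin n => p.1 < p.2 ∧ w p.2 < w p.1)).card

/-- One step in the Bruhat order: right multiplication by a transposition
that increases the length. -/
def bruhatStep {n : ℕ} (u v : Equiv.Perm (Fin n)) : Prop :=
  (∃ i j : Fin n, i ≠ j ∧ v = u * Equiv.swap i j) ∧ nInv u < nInv v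

/-- The strong Bruhat order on `S_n`. -/
def bruhatLE {n : ℕ} (u v : Equiv.Perm (Fin n)) : Prop :=
  Relation.ReflTransGen bruhatStep u v

/-- `w` covers `w'` in the strong Bruhat order. -/
def bruhatCovers {n : ℕ} (w w' : Equiv.Perm (Fin n)) : Prop :=
  bruhatLE w' w ∧ nInv w = nInv w' + 1

lemma nInv_eq_sum {n : ℕ} (w : Equiv.Perm (Fin n)) : nInv w = ∑ i, lehmer w i := by
  unfold nInv lehmer
  rw [Finset.card_eq_sum_card_fiberwise (f := Prod.fst) (t := Finset.univ)
    (fun _ _ => Finset.mem_univ _)]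
  refine Finset.sum_congr rfl (fun i _ => ?_)
  refine Finset.card_bij' (fun p _ => p.2) (fun k _ => (i, k)) ?_ ?_ ?_ ?_
  · intro p hp
    simp only [Finset.mem_filter, Finset.mem_univ, true_and] at hp ⊢
    obtain ⟨⟨h1, h2⟩, h3⟩ := hp
    subst h3; exact ⟨h1, h2⟩
  · intro k hk
    simp only [Finset.mem_filter, Finset.mem_univ, true_and] at hk ⊢
    exact ⟨hk, trivial⟩
  · intro p hp
    simp only [Finset.mem_filter] at hp
    exact (Prod.ext hp.2.symm rfl)
  · intro k hk; rfl

lemma lehmer_eq_card_values {n : ℕ} (w : Equiv.Perm (Fin n)) (i : Fin n) :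
    lehmer w i =
      (Finset.univ.filter (fun v : Fin n => v < w i ∧ ∀ k, k < i → w k ≠ v)).card := by
  unfold lehmer
  refine Finset.card_bij' (fun k _ => w k) (fun v _ => w.symm v) ?_ ?_ ?_ ?_
  · intro k hk
    simp only [Finset.mem_filter, Finset.mem_univ, true_and] at hk ⊢
    refine ⟨hk.2, fun k' hk' => ?_⟩
    intro hEq
    have : k' = k := w.injective hEq
    exact absurd (this ▸ hk') (lt_asymm hk.1)
  · intro v hv
    simp only [Finset.mem_filter, Finset.mem_univ, true_and] at hv ⊢
    obtain ⟨hlt, hne⟩ := hv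
    have hws : w (w.symm v) = v := w.apply_symm_apply v
    have hne_i : w.symm v ≠ i := by
      intro h; rw [h] at hws; exact (ne_of_lt hlt) hws.symm
    have hnlt : ¬ (w.symm v < i) := by
      intro h; exact hne (w.symm v) h hws
    constructor
    · rcases lt_trichotomy (w.symm v) i with h | h | h
      · exact absurd h hnlt
      · exact absurd h hne_i
      · exact h
    · rw [hws]; exact hlt
  · intro k _; exact w.symm_apply_apply k
  · intro v _; exact w.apply_symm_apply v

lemma code_injective {n : ℕ} (w w' : Equiv.Perm (Fin n))
    (h : ∀ i, lehmer w i = lehmer w' i) : w = w' := by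
  suffices key : ∀ m : ℕ, ∀ i : Fin n, i.val = m → w i = w' i by
    exact Equiv.ext fun i => key i.val i rfl
  intro m
  induction m using Nat.strong_induction_on with
  | _ m ih =>
    intro i him
    have hlt : ∀ k : Fin n, k < i → w k = w' k := fun k hk =>
      ih k.val (him ▸ hk) k rfl
    -- rewrite lehmer w' i using w on the prefix
    have hA : ∀ x : Fin n,
        (Finset.univ.filter (fun v : Fin n => v < x ∧ ∀ k, k < i → w' k ≠ v)) =
        (Finset.univ.filter (fun v : Fin n => v < x ∧ ∀ k, k < i → w k ≠ v)) := by
      intro x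
      apply Finset.filter_congr
      intro v _
      constructor
      · rintro ⟨h1, h2⟩; exact ⟨h1, fun k hk => (hlt k hk) ▸ h2 k hk⟩
      · rintro ⟨h1, h2⟩; exact ⟨h1, fun k hk => (hlt k hk).symm ▸ h2 k hk⟩
    have hcard : (Finset.univ.filter (fun v : Fin n => v < w i ∧ ∀ k, k < i → w k ≠ v)).card
        = (Finset.univ.filter (fun v : Fin n => v < w' i ∧ ∀ k, k < i → w k ≠ v)).card := by
      rw [← lehmer_eq_card_values, h i, lehmer_eq_card_values, hA]
    have hmemw : ∀ k : Fin n, k < i → w k ≠ w i := fun k hk hEq =>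
      absurd (w.injective hEq) (ne_of_lt hk)
    have hmemw' : ∀ k : Fin n, k < i → w k ≠ w' i := fun k hk hEq => by
      rw [hlt k hk] at hEq
      exact absurd (w'.injective hEq) (ne_of_lt hk)
    rcases lt_trichotomy (w i) (w' i) with hc | hc | hc
    · exfalso
      have hss : (Finset.univ.filter (fun v : Fin n => v < w i ∧ ∀ k, k < i → w k ≠ v)) ⊂
          (Finset.univ.filter (fun v : Fin n => v < w' i ∧ ∀ k, k < i → w k ≠ v)) := by
        constructor
        · intro v hv
          simp only [Finset.mem_filter, Finset.mem_univ, true_and] at hv ⊢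
          exact ⟨lt_trans hv.1 hc, hv.2⟩
        · intro hsub
          have : w i ∈ (Finset.univ.filter (fun v : Fin n => v < w i ∧ ∀ k, k < i → w k ≠ v)) :=
            hsub (by simp only [Finset.mem_filter, Finset.mem_univ, true_and]; exact ⟨hc, hmemw⟩)
          simp only [Finset.mem_filter, Finset.mem_univ, true_and] at this
          exact lt_irrefl _ this.1
      exact absurd hcard (ne_of_lt (Finset.card_lt_card hss))
    · exact hc
    · exfalso
      have hss : (Finset.univ.filter (fun v : Fin n => v < w' i ∧ ∀ k, k < i → w k ≠ v)) ⊂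
          (Finset.univ.filter (fun v : Fin n => v < w i ∧ ∀ k, k < i → w k ≠ v)) := by
        constructor
        · intro v hv
          simp only [Finset.mem_filter, Finset.mem_univ, true_and] at hv ⊢
          exact ⟨lt_trans hv.1 hc, hv.2⟩
        · intro hsub
          have : w' i ∈ (Finset.univ.filter (fun v : Fin n => v < w' i ∧ ∀ k, k < i → w k ≠ v)) :=
            hsub (by simp only [Finset.mem_filter, Finset.mem_univ, true_and]; exact ⟨hc, hmemw'⟩)
          simp only [Finset.mem_filter, Finset.mem_univ, true_and] at this
          exact lt_irrefl _ this.1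
      exact absurd hcard.symm (ne_of_lt (Finset.card_lt_card hss))

/-- if the codes of `w` and `w'` differ only in one entry,
by exactly one, then `w` covers `w'` in the strong Bruhat order. -/
theorem covers_of_code_diff_one (n : ℕ) (w w' : Equiv.Perm (Fin n)) (i : Fin n)
    (h1 : lehmer w' i + 1 = lehmer w i)
    (h2 : ∀ k, k ≠ i → lehmer w' k = lehmer w k) :
    bruhatCovers w w' := by
  classical
  -- the inversion set at position i
  set S : Finset (Fin n) := Finset.univ.filter (fun k : Fin n => i < k ∧ w k < w i) with hSdef
  have hScard : S.card = lehmer w i := rfl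
  have hSne : S.Nonempty := by
    rw [← Finset.card_pos, hScard]; omega
  have hSimg : (S.image w).Nonempty := hSne.image w
  obtain ⟨j, hjS, hjw⟩ := Finset.mem_image.mp ((S.image w).max'_mem hSimg)
  rw [hSdef] at hjS
  simp only [Finset.mem_filter, Finset.mem_univ, true_and] at hjS
  obtain ⟨hij, hji⟩ := hjS
  have hmax : ∀ k : Fin n, i < k → w k < w i → w k ≤ w j := by
    intro k hk1 hk2
    rw [hjw]
    exact Finset.le_max' _ _ (Finset.mem_image_of_mem w
      (by rw [hSdef]; simp only [Finset.mem_filter, Finset.mem_univ, true_and]; exact ⟨hk1, hk2⟩))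
  have hne : i ≠ j := ne_of_lt hij
  set u : Equiv.Perm (Fin n) := w * Equiv.swap i j with hu
  have hui : u i = w j := by simp [hu, Equiv.Perm.mul_apply]
  have huj : u j = w i := by simp [hu, Equiv.Perm.mul_apply]
  have hukk : ∀ k : Fin n, k ≠ i → k ≠ j → u k = w k := by
    intro k hk1 hk2
    simp [hu, Equiv.Perm.mul_apply, Equiv.swap_apply_of_ne_of_ne hk1 hk2]
  -- the codes of u and w' agree
  have hcode : ∀ m : Fin n, lehmer u m = lehmer w' m := by
    intro m
    by_cases hmi : m = i
    · subst hmi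
      have hset : Finset.univ.filter (fun k : Fin n => m < k ∧ u k < u m) = S.erase j := by
        ext k
        simp only [Finset.mem_filter, Finset.mem_univ, true_and, Finset.mem_erase, hSdef]
        constructor
        · rintro ⟨hk1, hk2⟩
          rw [hui] at hk2
          have hkj : k ≠ j := by
            intro h; rw [h, huj] at hk2; exact absurd hk2 (asymm hji)
          have hki : k ≠ m := ne_of_gt hk1
          rw [hukk k hki hkj] at hk2
          exact ⟨hkj, hk1, lt_trans hk2 hji⟩
        · rintro ⟨hkj, hk1, hk2⟩
          have hki : k ≠ m := ne_of_gt hk1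
          refine ⟨hk1, ?_⟩
          rw [hui, hukk k hki hkj]
          exact lt_of_le_of_ne (hmax k hk1 hk2) (fun h => hkj (w.injective h))
      have hji' : j ∈ S := by
        rw [hSdef]; simp only [Finset.mem_filter, Finset.mem_univ, true_and]
        exact ⟨hij, hji⟩
      have : lehmer u m = S.card - 1 := by
        unfold lehmer; rw [hset, Finset.card_erase_of_mem hji']
      rw [this, hScard]
      omega
    · rw [h2 m hmi]
      rcases lt_trichotomy m i with hmlt | h | hmgt
      · -- m < i : bijection by the swap
        have hmj : m ≠ j := ne_of_lt (lt_trans hmlt hij)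
        have hum : u m = w m := hukk m hmi hmj
        have hswap_gt : ∀ k : Fin n, m < k → m < Equiv.swap i j k := by
          intro k hk
          rcases eq_or_ne k i with rfl | hki
          · rw [Equiv.swap_apply_left]; exact lt_trans hmlt hij
          · rcases eq_or_ne k j with rfl | hkj
            · rw [Equiv.swap_apply_right]; exact hmlt
            · rw [Equiv.swap_apply_of_ne_of_ne hki hkj]; exact hk
        unfold lehmer
        refine Finset.card_bij' (fun k _ => Equiv.swap i j k) (fun k _ => Equiv.swap i j k)
          ?_ ?_ ?_ ?_
        · intro k hk
          simp only [Finset.mem_filter, Finset.mem_univ, true_and] at hk ⊢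
          refine ⟨hswap_gt k hk.1, ?_⟩
          have : w (Equiv.swap i j k) = u k := rfl
          rw [this]
          rw [hum] at hk
          exact hk.2
        · intro k hk
          simp only [Finset.mem_filter, Finset.mem_univ, true_and] at hk ⊢
          refine ⟨hswap_gt k hk.1, ?_⟩
          have : u (Equiv.swap i j k) = w k := by
            rw [hu]; simp [Equiv.Perm.mul_apply]
          rw [this, hum]
          exact hk.2
        · intro k _; exact Equiv.swap_apply_self i j k
        · intro k _; exact Equiv.swap_apply_self i j k
      · exact absurd h hmi
      · -- i < m
        by_cases hmj : m = j
        · subst hmj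
          have hset : Finset.univ.filter (fun k : Fin n => m < k ∧ u k < u m)
              = Finset.univ.filter (fun k : Fin n => m < k ∧ w k < w m) := by
            ext k
            simp only [Finset.mem_filter, Finset.mem_univ, true_and]
            constructor
            · rintro ⟨hk1, hk2⟩
              have hki : k ≠ i := ne_of_gt (lt_trans hij hk1)
              have hkj : k ≠ m := ne_of_gt hk1
              rw [huj] at hk2
              rw [hukk k hki hkj] at hk2
              refine ⟨hk1, ?_⟩
              rw [← hukk k hki hkj] at hk2 ⊢
              rw [hukk k hki hkj] at hk2 ⊢
              exact lt_of_le_of_ne (hmax k (lt_trans hij hk1) hk2)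
                (fun h => hkj (w.injective h))
            · rintro ⟨hk1, hk2⟩
              have hki : k ≠ i := ne_of_gt (lt_trans hij hk1)
              have hkj : k ≠ m := ne_of_gt hk1
              rw [huj, hukk k hki hkj]
              exact ⟨hk1, lt_trans hk2 hji⟩
          unfold lehmer; rw [hset]
        · -- i < m, m ≠ j
          have hum : u m = w m := hukk m hmi hmj
          have hset : Finset.univ.filter (fun k : Fin n => m < k ∧ u k < u m)
              = Finset.univ.filter (fun k : Fin n => m < k ∧ w k < w m) := by
            ext k
            simp only [Finset.mem_filter, Finset.mem_univ, true_and]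
            rw [hum]
            rcases eq_or_ne k j with rfl | hkj
            · rw [huj]
              constructor
              · rintro ⟨hk1, hk2⟩
                exact ⟨hk1, lt_trans hji hk2⟩
              · rintro ⟨hk1, hk2⟩
                refine ⟨hk1, ?_⟩
                by_contra hcon
                push_neg at hcon
                have hmiw : w m ≠ w i := fun h => hmi (w.injective h)
                have : w m < w i := lt_of_le_of_ne hcon hmiw
                have := hmax m hmgt this
                exact absurd hk2 (not_lt.mpr this)
            · constructor
              · rintro ⟨hk1, hk2⟩
                have hki : k ≠ i := ne_of_gt (lt_trans hmgt hk1)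
                rw [hukk k hki hkj] at hk2
                exact ⟨hk1, hk2⟩
              · rintro ⟨hk1, hk2⟩
                have hki : k ≠ i := ne_of_gt (lt_trans hmgt hk1)
                rw [hukk k hki hkj]
                exact ⟨hk1, hk2⟩
          unfold lehmer; rw [hset]
  have huw' : u = w' := code_injective u w' hcode
  have hwrepr : w = w' * Equiv.swap i j := by
    rw [← huw', hu, mul_assoc, Equiv.swap_mul_self, mul_one]
  have hsum : nInv w = nInv w' + 1 := by
    rw [nInv_eq_sum, nInv_eq_sum,
      ← Finset.add_sum_erase Finset.univ (lehmer w) (Finset.mem_univ i),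
      ← Finset.add_sum_erase Finset.univ (lehmer w') (Finset.mem_univ i)]
    have hs : ∑ k ∈ Finset.univ.erase i, lehmer w k
        = ∑ k ∈ Finset.univ.erase i, lehmer w' k :=
      Finset.sum_congr rfl (fun k hk => (h2 k (Finset.ne_of_mem_erase hk)).symm)
    omega
  exact ⟨Relation.ReflTransGen.single ⟨⟨i, j, hne, hwrepr⟩, by omega⟩, hsum⟩
end

section
/- Suppose a composition α covers α' in position (i,j). Then for every k in [i+1, j−1], either α_k + c_{i,k}(α) ≥ α_i or α_k + c_{i,k}(α) < α'_i. -/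
lemma cmat_base (α : ℕ → ℕ) (i : ℕ) : cmat α i (i + 1) = 0 := by
  simp [cmat]

lemma cmat_step (α : ℕ → ℕ) (i k : ℕ) (hk : i + 1 ≤ k) :
    cmat α i (k + 1) = cmat α i k + if α k + cmat α i k < α i then 1 else 0 := by
  rw [cmat, if_neg (by omega)]
  congr 1
  by_cases h : α k + cmat α i k < α i
  · rw [if_pos (by omega), if_pos h]
  · rw [if_neg (by omega), if_neg h]

/-- difference invariant: `c'_k ≤ c_k` and `c_k - c'_k ≤ α_i - α'_i`. -/
lemma diff_bound (α α' : ℕ → ℕ) (i j : ℕ) (hii : α' i + 1 ≤ α i)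
    (heq : ∀ m, i + 1 ≤ m → m < j → α' m = α m) :
    ∀ k, i + 1 ≤ k → k ≤ j →
      cmat α' i k ≤ cmat α i k ∧ cmat α i k + α' i ≤ cmat α' i k + α i := by
  intro k
  induction k with
  | zero => omega
  | succ n ih =>
    intro h1 h2
    rcases Nat.lt_or_ge (i + 1) (n + 1) with hlt | hge
    · have hn1 : i + 1 ≤ n := by omega
      have ihn := ih hn1 (by omega)
      rw [cmat_step α i n hn1, cmat_step α' i n hn1,
        heq n hn1 (by omega)]
      by_cases h1' : α n + cmat α i n < α i <;>
        by_cases h2' : α n + cmat α' i n < α' i <;>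
        simp only [h1', h2', if_true, if_false] <;> omega
    · have hni : n = i := by omega
      subst hni
      rw [cmat_base, cmat_base]
      omega

/-- the difference is nondecreasing from `k` up to `j`. -/
lemma diff_mono (α α' : ℕ → ℕ) (i j : ℕ) (hii : α' i + 1 ≤ α i)
    (heq : ∀ m, i + 1 ≤ m → m < j → α' m = α m) :
    ∀ n k, i + 1 ≤ k → k + n = j →
      cmat α i k + cmat α' i j ≤ cmat α i j + cmat α' i k := by
  intro n
  induction n with
  | zero => intro k hk hkj; obtain rfl : k = j := (by omega); exact le_rfl
  | succ m ih =>
    intro k hk hkj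
    have hkj' : k < j := by omega
    have hb := diff_bound α α' i j hii heq k hk (by omega)
    have step : cmat α i k + cmat α' i (k + 1) ≤ cmat α i (k + 1) + cmat α' i k := by
      rw [cmat_step α i k hk, cmat_step α' i k hk, heq k hk hkj']
      by_cases h1' : α k + cmat α i k < α i <;>
        by_cases h2' : α k + cmat α' i k < α' i <;>
        simp only [h1', h2', if_true, if_false] <;> omega
    have := ih (k + 1) (by omega) (by omega)
    omega

lemma cmat_eq (α α' : ℕ → ℕ) (i j : ℕ) (hii : α' i + 1 ≤ α i)
    (heq : ∀ m, i + 1 ≤ m → m < j → α' m = α m)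
    (hj : cmat α i j = cmat α' i j) :
    ∀ k, i + 1 ≤ k → k ≤ j → cmat α i k = cmat α' i k := by
  intro k hk hkj
  have hb := diff_bound α α' i j hii heq k hk hkj
  have hm := diff_mono α α' i j hii heq (j - k) k hk (by omega)
  omega

/-- property (iv) of a covering pair: for each `k ∈ [i+1, j-1]`,
either `α_k + c_{i,k}(α) ≥ α_i` or `α_k + c_{i,k}(α) < α'_i`. -/
theorem cmat_dichotomy_of_coversAt (α α' : ℕ → ℕ) (i j : ℕ)
    (h : CoversAt α α' i j) :
    ∀ k, i + 1 ≤ k → k < j →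
      α i ≤ α k + cmat α i k ∨ α k + cmat α i k < α' i := by
  obtain ⟨hi1, hij, hii, hsum, hoff, hcj, hval⟩ := h
  have heq : ∀ m, i + 1 ≤ m → m < j → α' m = α m := fun m hm1 hm2 =>
    hoff m (by omega) (by omega)
  intro k hk hkj
  have e1 := cmat_eq α α' i j hii heq hcj k hk (by omega)
  have e2 := cmat_eq α α' i j hii heq hcj (k + 1) (by omega) (by omega)
  have s1 := cmat_step α i k hk
  have s2 := cmat_step α' i k hk
  rw [heq k hk hkj] at s2
  by_cases h1' : α k + cmat α i k < α i <;>
    by_cases h2' : α k + cmat α' i k < α' i <;>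
    simp only [h1', h2', if_true, if_false] at s1 s2 <;> omega
end

section
/- Let α be a composition that is both (i,z_1)-removable and (i,z_2)-removable. Then z_1 = z_2 if and only if J̃(i,z_1) = J̃(i,z_2), and z_1 > z_2 if and only if J̃(i,z_1) < J̃(i,z_2). -/
/-- `α` is `(i,z)`-removable. -/
def IsRemovable (α : ℕ → ℕ) (i z : ℕ) : Prop :=
  ∃ α' j, CoversAt α α' i j ∧ α' i + z = α i

/-- `J̃(i,z)`: the greatest `j > i` such that `c_{i,j}(α) = c_{i,j}(α̃)`,
where `α̃` is `α` with `α_i` replaced by `α_i - z`. -/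
noncomputable def Jt (α : ℕ → ℕ) (i z : ℕ) : ℕ :=
  sSup {j | i < j ∧ cmat α i j = cmat (Function.update α i (α i - z)) i j}

lemma cmat_of_le (β : ℕ → ℕ) (i j : ℕ) (h : j ≤ i + 1) : cmat β i j = 0 := by
  cases j with
  | zero => rfl
  | succ j => simp [cmat, h]

lemma cmat_succ_of_lt (β : ℕ → ℕ) (i j : ℕ) (h : i < j) :
    cmat β i (j + 1) = cmat β i j + if β j < β i - cmat β i j then 1 else 0 := by
  have h' : ¬ (j + 1 ≤ i + 1) := by omega
  simp [cmat, h']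

/-- `cmat β i j` only depends on the values of `β` at `i` and at indices `< j`. -/
lemma cmat_congr (β γ : ℕ → ℕ) (i : ℕ) (hpiv : β i = γ i) :
    ∀ j, (∀ k, i < k → k < j → β k = γ k) → cmat β i j = cmat γ i j := by
  intro j
  induction j with
  | zero => intro _; rfl
  | succ j ih =>
    intro hag
    by_cases h : j + 1 ≤ i + 1
    · rw [cmat_of_le _ _ _ h, cmat_of_le _ _ _ h]
    · have hij : i < j := by omega
      rw [cmat_succ_of_lt _ _ _ hij, cmat_succ_of_lt _ _ _ hij,
        ih (fun k hk1 hk2 => hag k hk1 (by omega)), hag j hij (by omega), hpiv]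

/-- Recursion for the modified sequence. -/
lemma cmat_tilde_succ (α : ℕ → ℕ) (i z j : ℕ) (h : i < j) :
    cmat (Function.update α i (α i - z)) i (j + 1) =
      cmat (Function.update α i (α i - z)) i j +
        if α j < (α i - z) - cmat (Function.update α i (α i - z)) i j then 1 else 0 := by
  rw [cmat_succ_of_lt _ _ _ h, Function.update_of_ne (by omega), Function.update_self]

/-- The basic invariant: `g ≤ f ≤ g + z`. -/
lemma cmat_inv_s14 (α : ℕ → ℕ) (i z : ℕ) (j : ℕ) (hj : i < j) :
    cmat (Function.update α i (α i - z)) i j ≤ cmat α i j ∧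
    cmat α i j ≤ cmat (Function.update α i (α i - z)) i j + z := by
  induction j, hj using Nat.le_induction with
  | base =>
    rw [cmat_of_le _ _ _ le_rfl, cmat_of_le _ _ _ le_rfl]
    omega
  | succ j hj ih =>
    have hij : i < j := hj
    rw [cmat_succ_of_lt α i j hij, cmat_tilde_succ α i z j hij]
    split_ifs <;> omega

/-- Once the two sequences differ, they differ forever. -/
lemma cmat_diff_persists (α : ℕ → ℕ) (i z : ℕ) (j : ℕ) (hj : i < j)
    (hlt : cmat (Function.update α i (α i - z)) i j < cmat α i j) :
    ∀ j', j ≤ j' → cmat (Function.update α i (α i - z)) i j' < cmat α i j' := by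
  intro j' hjj'
  induction j', hjj' using Nat.le_induction with
  | base => exact hlt
  | succ j' hjj' ih =>
    have hij' : i < j' := by omega
    have hinv := cmat_inv_s14 α i z j' hij'
    rw [cmat_succ_of_lt α i j' hij', cmat_tilde_succ α i z j' hij']
    split_ifs <;> omega

/-- On the interval where `f = g z₁`, also `f = g z₂` for `z₂ ≤ z₁`. -/
lemma cmat_eq_prop (α : ℕ → ℕ) (i z₁ z₂ : ℕ) (hz21 : z₂ ≤ z₁) (j : ℕ) (hj : i < j)
    (h1 : cmat α i j = cmat (Function.update α i (α i - z₁)) i j)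
    (h1' : cmat α i (j + 1) = cmat (Function.update α i (α i - z₁)) i (j + 1))
    (h2 : cmat α i j = cmat (Function.update α i (α i - z₂)) i j) :
    cmat α i (j + 1) = cmat (Function.update α i (α i - z₂)) i (j + 1) := by
  rw [cmat_succ_of_lt α i j hj, cmat_tilde_succ α i z₁ j hj] at h1'
  rw [cmat_succ_of_lt α i j hj, cmat_tilde_succ α i z₂ j hj]
  rw [← h1] at h1'
  rw [← h2]
  split_ifs at h1' ⊢ <;> omega

/-- A removable pair yields a witness index. -/
lemma removable_witness (α : ℕ → ℕ) (i z : ℕ) (h : IsRemovable α i z) (hz' : z ≤ α i) :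
    ∃ j₀, i < j₀ ∧ cmat α i j₀ = cmat (Function.update α i (α i - z)) i j₀ ∧
      cmat α i j₀ + α j₀ = α i - z := by
  obtain ⟨α', j, hcov, hzi⟩ := h
  obtain ⟨-, hij, -, -, hag, hc, hval⟩ := hcov
  have hai : α' i = α i - z := by omega
  refine ⟨j, hij, ?_, by omega⟩
  rw [hc]
  apply cmat_congr
  · rw [hai, Function.update_self]
  · intro k hk1 hk2
    rw [hag k (by omega) (by omega), Function.update_of_ne (by omega)]

/-- The witness index is the greatest element of the set defining `Jt`. -/
lemma witness_isGreatest (α : ℕ → ℕ) (i z : ℕ) (hz : 1 ≤ z) (hz' : z ≤ α i)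
    (j₀ : ℕ) (hj₀ : i < j₀)
    (heq : cmat α i j₀ = cmat (Function.update α i (α i - z)) i j₀)
    (hval : cmat α i j₀ + α j₀ = α i - z) :
    IsGreatest {j | i < j ∧ cmat α i j = cmat (Function.update α i (α i - z)) i j} j₀ := by
  constructor
  · exact ⟨hj₀, heq⟩
  · rintro j ⟨hij, hfg⟩
    by_contra hle
    push_neg at hle
    have hdiff : cmat (Function.update α i (α i - z)) i (j₀ + 1) < cmat α i (j₀ + 1) := by
      rw [cmat_succ_of_lt α i j₀ hj₀, cmat_tilde_succ α i z j₀ hj₀]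
      split_ifs <;> omega
    have := cmat_diff_persists α i z (j₀ + 1) (by omega) hdiff j (by omega)
    omega

/-- `Jt` equals the witness index. -/
lemma jt_eq_witness (α : ℕ → ℕ) (i z : ℕ) (hz : 1 ≤ z) (hz' : z ≤ α i)
    (h : IsRemovable α i z) :
    ∃ j₀, Jt α i z = j₀ ∧ i < j₀ ∧
      cmat α i j₀ = cmat (Function.update α i (α i - z)) i j₀ ∧
      cmat α i j₀ + α j₀ = α i - z ∧
      IsGreatest {j | i < j ∧ cmat α i j = cmat (Function.update α i (α i - z)) i j} j₀ := by
  obtain ⟨j₀, hj₀, heq, hval⟩ := removable_witness α i z h hz'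
  have hg := witness_isGreatest α i z hz hz' j₀ hj₀ heq hval
  exact ⟨j₀, hg.csSup_eq.symm ▸ rfl, hj₀, heq, hval, hg⟩

/-- Strict antitonicity of `Jt` for removable `z`'s. -/
lemma jt_strict_anti (α : ℕ → ℕ) (i z₁ z₂ : ℕ)
    (hz₁ : 1 ≤ z₁) (hz₁' : z₁ ≤ α i) (hz₂ : 1 ≤ z₂) (hz₂' : z₂ ≤ α i)
    (h₁ : IsRemovable α i z₁) (h₂ : IsRemovable α i z₂) (hlt : z₂ < z₁) :
    Jt α i z₁ < Jt α i z₂ := by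
  obtain ⟨j₁, hJ₁, hij₁, heq₁, hval₁, hg₁⟩ := jt_eq_witness α i z₁ hz₁ hz₁' h₁
  obtain ⟨j₂, hJ₂, hij₂, heq₂, hval₂, hg₂⟩ := jt_eq_witness α i z₂ hz₂ hz₂' h₂
  -- On the whole interval (i, j₁], f = g z₁
  have hint1 : ∀ j, i < j → j ≤ j₁ → cmat α i j = cmat (Function.update α i (α i - z₁)) i j := by
    intro j hij hjj₁
    by_contra hne
    have hinv := cmat_inv_s14 α i z₁ j hij
    have := cmat_diff_persists α i z₁ j hij (by omega) j₁ hjj₁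
    omega
  -- hence f = g z₂ on (i, j₁]
  have hint2 : ∀ j, i < j → j ≤ j₁ → cmat α i j = cmat (Function.update α i (α i - z₂)) i j := by
    intro j hij hjj₁
    induction j, hij using Nat.le_induction with
    | base => rw [cmat_of_le _ _ _ le_rfl, cmat_of_le _ _ _ le_rfl]
    | succ j hij ih =>
      exact cmat_eq_prop α i z₁ z₂ (le_of_lt hlt) j hij
        (hint1 j hij (by omega)) (hint1 (j + 1) (by omega) hjj₁) (ih (by omega))
  have hmem : j₁ ∈ {j | i < j ∧ cmat α i j = cmat (Function.update α i (α i - z₂)) i j} :=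
    ⟨hij₁, hint2 j₁ hij₁ le_rfl⟩
  have hle : j₁ ≤ j₂ := hg₂.2 hmem
  have hne : j₁ ≠ j₂ := by
    intro he
    rw [he] at hval₁
    omega
  omega

/-- comparison of removings. -/
theorem compare_removings (α : ℕ → ℕ) (hbd : ∃ m, ∀ k, m < k → α k = 0)
    (i z₁ z₂ : ℕ) (hi : 1 ≤ i)
    (hz₁ : 1 ≤ z₁) (hz₁' : z₁ ≤ α i) (hz₂ : 1 ≤ z₂) (hz₂' : z₂ ≤ α i)
    (h₁ : IsRemovable α i z₁) (h₂ : IsRemovable α i z₂) :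
    (z₁ = z₂ ↔ Jt α i z₁ = Jt α i z₂) ∧
    (z₂ < z₁ ↔ Jt α i z₁ < Jt α i z₂) := by
  have k12 : z₂ < z₁ → Jt α i z₁ < Jt α i z₂ :=
    jt_strict_anti α i z₁ z₂ hz₁ hz₁' hz₂ hz₂' h₁ h₂
  have k21 : z₁ < z₂ → Jt α i z₂ < Jt α i z₁ :=
    jt_strict_anti α i z₂ z₁ hz₂ hz₂' hz₁ hz₁' h₂ h₁
  constructor
  · constructor
    · rintro rfl; rfl
    · intro hJ
      rcases lt_trichotomy z₁ z₂ with h | h | h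
      · have := k21 h; omega
      · exact h
      · have := k12 h; omega
  · constructor
    · exact k12
    · intro hJ
      rcases lt_trichotomy z₁ z₂ with h | h | h
      · have := k21 h; omega
      · subst h; omega
      · exact h
end

section
/- Let w ∈ S_n with α = code(w). Then for all 1 ≤ i < j ≤ n, c_{i,j}(α) = #{k : i < k < j and w(k) < w(i)}. In particular, c_{i,n}(α) = α_i − [w(n) < w(i)] and c_{i,n+1}(α) = α_i. -/
/-- The Lehmer code of `w ∈ S_n`, as a function on 1-based positions in `ℕ`. -/
def codeP (n : ℕ) (w : Equiv.Perm (Fin n)) (i : ℕ) : ℕ :=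
  if h : 1 ≤ i ∧ i ≤ n then
    (Finset.univ.filter (fun k : Fin n => i ≤ k.val ∧ w k < w ⟨i - 1, by omega⟩)).card
  else 0

lemma codeP_split (n : ℕ) (w : Equiv.Perm (Fin n)) (i j : ℕ) (hi : 1 ≤ i)
    (hij : i < j) (hj : j ≤ n) :
    codeP n w i =
      (Finset.univ.filter (fun k : Fin n =>
        i ≤ k.val ∧ k.val + 1 < j ∧ w k < w ⟨i - 1, Nat.lt_of_lt_of_le (Nat.sub_lt hi Nat.one_pos) (by omega)⟩)).card +
      (Finset.univ.filter (fun k : Fin n =>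
        j ≤ k.val + 1 ∧ w k < w ⟨i - 1, Nat.lt_of_lt_of_le (Nat.sub_lt hi Nat.one_pos) (by omega)⟩)).card := by
  unfold codeP
  rw [dif_pos ⟨hi, by omega⟩]
  rw [← Finset.card_union_of_disjoint]
  · congr 1
    ext k
    simp only [Finset.mem_filter, Finset.mem_univ, true_and, Finset.mem_union]
    constructor
    · rintro ⟨h1, h2⟩
      rcases lt_or_ge (k.val + 1) j with h | h
      · exact Or.inl ⟨h1, h, h2⟩
      · exact Or.inr ⟨h, h2⟩
    · rintro (⟨h1, _, h2⟩ | ⟨h1, h2⟩)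
      · exact ⟨h1, h2⟩
      · exact ⟨by omega, h2⟩
  · rw [Finset.disjoint_filter]
    rintro k _ ⟨_, h2, _⟩ ⟨h3, _⟩
    omega

lemma codeP_eq (n : ℕ) (w : Equiv.Perm (Fin n)) (i : ℕ) (hi : 1 ≤ i) (hin : i ≤ n) :
    codeP n w i =
      (Finset.univ.filter (fun k : Fin n =>
        i ≤ k.val ∧ k.val + 1 < n + 1 ∧ w k < w ⟨i - 1, Nat.lt_of_lt_of_le (Nat.sub_lt hi Nat.one_pos) (by omega)⟩)).card := by
  unfold codeP
  rw [dif_pos ⟨hi, hin⟩]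
  congr 1
  ext k
  simp only [Finset.mem_filter, Finset.mem_univ, true_and]
  have := k.isLt
  constructor
  · rintro ⟨h1, h2⟩; exact ⟨h1, by omega, h2⟩
  · rintro ⟨h1, _, h2⟩; exact ⟨h1, h2⟩

lemma key (n : ℕ) (w : Equiv.Perm (Fin n)) (i j : ℕ) (hi : 1 ≤ i)
    (hij : i < j) (hj : j ≤ n) :
    (codeP n w j < codeP n w i -
      (Finset.univ.filter (fun k : Fin n =>
        i ≤ k.val ∧ k.val + 1 < j ∧ w k < w ⟨i - 1, Nat.lt_of_lt_of_le (Nat.sub_lt hi Nat.one_pos) (by omega)⟩)).card) ↔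
    w ⟨j - 1, by omega⟩ < w ⟨i - 1, Nat.lt_of_lt_of_le (Nat.sub_lt hi Nat.one_pos) (by omega)⟩ := by
  have hsplit := codeP_split n w i j hi hij hj
  rw [hsplit]
  rw [Nat.add_sub_cancel_left]
  have hj' : codeP n w j =
      (Finset.univ.filter (fun k : Fin n =>
        j ≤ k.val ∧ w k < w ⟨j - 1, by omega⟩)).card := by
    unfold codeP; rw [dif_pos ⟨by omega, hj⟩]
  rw [hj']
  have hne : w ⟨j - 1, by omega⟩ ≠ w ⟨i - 1, Nat.lt_of_lt_of_le (Nat.sub_lt hi Nat.one_pos) (by omega)⟩ := by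
    intro h
    have h2 := w.injective h
    have : j - 1 = i - 1 := congrArg Fin.val h2
    omega
  constructor
  · intro hlt
    by_contra hnot
    have hij' : w ⟨i - 1, Nat.lt_of_lt_of_le (Nat.sub_lt hi Nat.one_pos) (by omega)⟩ < w ⟨j - 1, by omega⟩ :=
      lt_of_le_of_ne (not_lt.mp hnot) hne.symm
    have hsub : (Finset.univ.filter (fun k : Fin n =>
        j ≤ k.val + 1 ∧ w k < w ⟨i - 1, Nat.lt_of_lt_of_le (Nat.sub_lt hi Nat.one_pos) (by omega)⟩)) ⊆
        (Finset.univ.filter (fun k : Fin n =>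
        j ≤ k.val ∧ w k < w ⟨j - 1, by omega⟩)) := by
      intro k hk
      simp only [Finset.mem_filter, Finset.mem_univ, true_and] at hk ⊢
      obtain ⟨h1, h2⟩ := hk
      have hkj : w k < w ⟨j - 1, by omega⟩ := lt_trans h2 hij'
      have hkne : (k : ℕ) ≠ j - 1 := by
        intro hv
        have hk' : k = ⟨j - 1, by omega⟩ := Fin.ext hv
        rw [hk'] at hkj
        exact lt_irrefl _ hkj
      exact ⟨by omega, hkj⟩
    have := Finset.card_le_card hsub
    omega
  · intro hlt
    apply Finset.card_lt_card
    rw [Finset.ssubset_iff_of_subset]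
    · refine ⟨⟨j - 1, by omega⟩, ?_, ?_⟩
      · simp only [Finset.mem_filter, Finset.mem_univ, true_and]
        exact ⟨show j ≤ j - 1 + 1 by omega, hlt⟩
      · simp only [Finset.mem_filter, Finset.mem_univ, true_and, not_and]
        intro h
        exact absurd (show j ≤ j - 1 from h) (by omega)
    · intro k hk
      simp only [Finset.mem_filter, Finset.mem_univ, true_and] at hk ⊢
      exact ⟨by omega, lt_trans hk.2 hlt⟩

lemma card_step (n : ℕ) (w : Equiv.Perm (Fin n)) (i j : ℕ) (hi : 1 ≤ i)
    (hij : i < j) (hj : j ≤ n) :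
    (Finset.univ.filter (fun k : Fin n =>
      i ≤ k.val ∧ k.val + 1 < j + 1 ∧ w k < w ⟨i - 1, Nat.lt_of_lt_of_le (Nat.sub_lt hi Nat.one_pos) (by omega)⟩)).card =
    (Finset.univ.filter (fun k : Fin n =>
      i ≤ k.val ∧ k.val + 1 < j ∧ w k < w ⟨i - 1, Nat.lt_of_lt_of_le (Nat.sub_lt hi Nat.one_pos) (by omega)⟩)).card +
    (if w ⟨j - 1, by omega⟩ < w ⟨i - 1, Nat.lt_of_lt_of_le (Nat.sub_lt hi Nat.one_pos) (by omega)⟩ then 1 else 0) := by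
  by_cases hcond : w ⟨j - 1, by omega⟩ < w ⟨i - 1, Nat.lt_of_lt_of_le (Nat.sub_lt hi Nat.one_pos) (by omega)⟩
  · rw [if_pos hcond]
    have heq : (Finset.univ.filter (fun k : Fin n =>
        i ≤ k.val ∧ k.val + 1 < j + 1 ∧ w k < w ⟨i - 1, Nat.lt_of_lt_of_le (Nat.sub_lt hi Nat.one_pos) (by omega)⟩)) =
        insert ⟨j - 1, by omega⟩ (Finset.univ.filter (fun k : Fin n =>
        i ≤ k.val ∧ k.val + 1 < j ∧ w k < w ⟨i - 1, Nat.lt_of_lt_of_le (Nat.sub_lt hi Nat.one_pos) (by omega)⟩)) := by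
      ext k
      simp only [Finset.mem_filter, Finset.mem_univ, true_and, Finset.mem_insert]
      constructor
      · rintro ⟨h1, h2, h3⟩
        rcases lt_or_ge (k.val + 1) j with h | h
        · exact Or.inr ⟨h1, h, h3⟩
        · exact Or.inl (Fin.ext (show (k : ℕ) = j - 1 by omega))
      · rintro (h | ⟨h1, h2, h3⟩)
        · subst h
          exact ⟨show i ≤ j - 1 by omega, show j - 1 + 1 < j + 1 by omega, hcond⟩
        · exact ⟨h1, by omega, h3⟩
    rw [heq, Finset.card_insert_of_notMem]
    intro hmem
    simp only [Finset.mem_filter, Finset.mem_univ, true_and] at hmem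
    exact absurd hmem.2.1 (show ¬ (j - 1 + 1 < j) by omega)
  · rw [if_neg hcond, Nat.add_zero]
    have heq : (Finset.univ.filter (fun k : Fin n =>
        i ≤ k.val ∧ k.val + 1 < j + 1 ∧ w k < w ⟨i - 1, Nat.lt_of_lt_of_le (Nat.sub_lt hi Nat.one_pos) (by omega)⟩)) =
        (Finset.univ.filter (fun k : Fin n =>
        i ≤ k.val ∧ k.val + 1 < j ∧ w k < w ⟨i - 1, Nat.lt_of_lt_of_le (Nat.sub_lt hi Nat.one_pos) (by omega)⟩)) := by
      ext k
      simp only [Finset.mem_filter, Finset.mem_univ, true_and]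
      constructor
      · rintro ⟨h1, h2, h3⟩
        refine ⟨h1, ?_, h3⟩
        rcases lt_or_ge (k.val + 1) j with h | h
        · exact h
        · exfalso
          have hk' : k = ⟨j - 1, by omega⟩ := Fin.ext (show (k : ℕ) = j - 1 by omega)
          rw [hk'] at h3
          exact hcond h3
      · rintro ⟨h1, h2, h3⟩; exact ⟨h1, by omega, h3⟩
    rw [heq]
    omega

lemma codeP_last (n : ℕ) (w : Equiv.Perm (Fin n)) (hn : 1 ≤ n) :
    codeP n w n = 0 := by
  unfold codeP
  rw [dif_pos ⟨hn, le_refl n⟩]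
  rw [Finset.card_eq_zero, Finset.filter_eq_empty_iff]
  intro k _
  simp only [not_and]
  intro h
  exact absurd k.isLt (by omega)

/-- for `α = code(w)` and `1 ≤ i < j ≤ n`,
`c_{i,j}(α) = #{k : i < k < j and w(k) < w(i)}`; in particular
`c_{i,n}(α) = α_i - [w(n) < w(i)]` and `c_{i,n+1}(α) = α_i`. -/
theorem cmat_code_eq (n : ℕ) (w : Equiv.Perm (Fin n)) :
    (∀ (i j : ℕ) (hi : 1 ≤ i) (hij : i < j) (hj : j ≤ n),
      cmat (codeP n w) i j =
        (Finset.univ.filter (fun k : Fin n =>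
          i ≤ k.val ∧ k.val + 1 < j ∧ w k < w ⟨i - 1, by omega⟩)).card) ∧
    (∀ (i : ℕ) (hi : 1 ≤ i) (hin : i < n),
      cmat (codeP n w) i n +
        (if w ⟨n - 1, by omega⟩ < w ⟨i - 1, by omega⟩ then 1 else 0) =
        codeP n w i) ∧
    (∀ (i : ℕ) (hi : 1 ≤ i) (hin : i ≤ n),
      cmat (codeP n w) i (n + 1) = codeP n w i) := by
  have part1 : ∀ (j i : ℕ) (hi : 1 ≤ i) (hij : i < j) (hj : j ≤ n),
      cmat (codeP n w) i j =
        (Finset.univ.filter (fun k : Fin n =>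
          i ≤ k.val ∧ k.val + 1 < j ∧ w k < w ⟨i - 1, by omega⟩)).card := by
    intro j
    induction j with
    | zero => intro i _ h _; omega
    | succ j ih =>
      intro i hi hij hj
      rcases Nat.lt_or_ge i j with hlt | hge
      · have hjn : j ≤ n := by omega
        rw [cmat, if_neg (by omega), ih i hi hlt hjn,
          card_step n w i j hi hlt hjn]
        by_cases hc : w ⟨j - 1, by omega⟩ < w ⟨i - 1, by omega⟩
        · rw [if_pos ((key n w i j hi hlt hjn).mpr hc), if_pos hc]
        · rw [if_neg (fun h => hc ((key n w i j hi hlt hjn).mp h)), if_neg hc]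
      · have hij' : i = j := by omega
        subst hij'
        rw [cmat, if_pos (le_refl _)]
        symm
        rw [Finset.card_eq_zero, Finset.filter_eq_empty_iff]
        intro k _
        simp only [not_and]
        intro h1 h2
        exact absurd h2 (by omega)
  have part2 : ∀ (i : ℕ) (hi : 1 ≤ i) (hin : i < n),
      cmat (codeP n w) i n +
        (if w ⟨n - 1, by omega⟩ < w ⟨i - 1, by omega⟩ then 1 else 0) =
        codeP n w i := by
    intro i hi hin
    rw [part1 n i hi hin (le_refl n), codeP_eq n w i hi (le_of_lt hin),
      card_step n w i n hi hin (le_refl n)]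
  refine ⟨fun i j hi hij hj => part1 j i hi hij hj, part2, ?_⟩
  intro i hi hin
  rcases Nat.lt_or_ge i n with hlt | hge
  · rw [cmat, if_neg (by omega)]
    have h2 := part2 i hi hlt
    rw [codeP_last n w (by omega)]
    split_ifs at h2 with hw
    · rw [if_pos (show 0 < codeP n w i - cmat (codeP n w) i n by omega)]
      omega
    · rw [if_neg (show ¬ (0 < codeP n w i - cmat (codeP n w) i n) by omega)]
      omega
  · have hieq : i = n := by omega
    subst hieq
    rw [cmat, if_pos (by omega)]
    exact (codeP_last _ w hi).symm
end
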